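/- Every additive submonoid of the nonnegative reals generated by an increasing sequence is an FF-monoid: it is atomic and every element has only finitely many factorizations into atoms. -/

import Mathlib

/-- `a` is an atom of the additive submonoid `P`. -/
def IsAtomOf {K : Type*} [AddCommMonoid K] (P : AddSubmonoid K) (a : K) : Prop :=
  a ∈ P ∧ a ≠ 0 ∧ ∀ x ∈ P, ∀ y ∈ P, a = x + y → x = 0 ∨ y = 0

/-- `P` is atomic: every element is a finite sum of atoms. -/
def IsAtomicMonoid {K : Type*} [AddCommMonoid K] (P : AddSubmonoid K) : Prop :=
  ∀ x ∈ P, ∃ s : Multiset K, (∀ a ∈ s, IsAtomOf P a) ∧ s.sum = x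

/-- The set of factorizations of `x` into atoms of `P`. -/
def Factorizations {K : Type*} [AddCommMonoid K] (P : AddSubmonoid K) (x : K) :
    Set (Multiset K) :=
  {s | (∀ a ∈ s, IsAtomOf P a) ∧ s.sum = x}

/-- `P` is an FF-monoid. -/
def IsFFMonoid {K : Type*} [AddCommMonoid K] (P : AddSubmonoid K) : Prop :=
  IsAtomicMonoid P ∧ ∀ x ∈ P, (Factorizations P x).Finite

/-- `P` is a BF-monoid. -/
def IsBFMonoid {K : Type*} [AddCommMonoid K] (P : AddSubmonoid K) : Prop :=
  IsAtomicMonoid P ∧ ∀ x ∈ P, {n : ℕ | ∃ s ∈ Factorizations P x, Multiset.card s = n}.Finite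

open Set Multiset Pointwise

/-- The set of sums of `k`-element multisets from a PWO set of reals is PWO. -/
lemma sumsSet_isPWO (A : Set ℝ) (hA : A.IsPWO) (k : ℕ) :
    {y : ℝ | ∃ s : Multiset ℝ, (∀ a ∈ s, a ∈ A) ∧ Multiset.card s = k ∧ s.sum = y}.IsPWO := by
  induction k with
  | zero =>
    apply (Set.finite_singleton (0 : ℝ)).isPWO.mono
    rintro y ⟨s, -, hc, hs⟩
    rw [Multiset.card_eq_zero] at hc
    subst hc
    simp [← hs]
  | succ k ih =>
    apply (hA.add ih).mono
    rintro y ⟨s, hmem, hc, hs⟩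
    have hne : s ≠ 0 := by rintro rfl; simp at hc
    obtain ⟨a, ha⟩ := Multiset.exists_mem_of_ne_zero hne
    obtain ⟨t, rfl⟩ := Multiset.exists_cons_of_mem ha
    rw [Multiset.sum_cons] at hs
    rw [Multiset.card_cons] at hc
    exact ⟨a, hmem a (Multiset.mem_cons_self a t), t.sum,
      ⟨t, fun b hb => hmem b (Multiset.mem_cons_of_mem hb), Nat.succ_injective hc, rfl⟩, hs⟩

/-- Finitely many `k`-element multisets from a PWO set of reals have a given sum. -/
lemma finite_multisets_of_isPWO (A : Set ℝ) (hA : A.IsPWO) :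
    ∀ (k : ℕ) (x : ℝ),
      {s : Multiset ℝ | (∀ a ∈ s, a ∈ A) ∧ Multiset.card s = k ∧ s.sum = x}.Finite := by
  intro k
  induction k with
  | zero =>
    intro x
    apply (Set.finite_singleton (0 : Multiset ℝ)).subset
    rintro s ⟨-, hc, -⟩
    simp [Multiset.card_eq_zero.mp hc]
  | succ k ih =>
    intro x
    have hanti := Set.AddAntidiagonal.finite_of_isPWO hA (sumsSet_isPWO A hA k) x
    apply (hanti.biUnion (fun p _ => ((ih p.2).image (fun t => p.1 ::ₘ t)))).subset
    rintro s ⟨hmem, hc, hs⟩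
    have hne : s ≠ 0 := by rintro rfl; simp at hc
    obtain ⟨a, ha⟩ := Multiset.exists_mem_of_ne_zero hne
    obtain ⟨t, rfl⟩ := Multiset.exists_cons_of_mem ha
    rw [Multiset.sum_cons] at hs
    rw [Multiset.card_cons] at hc
    have htmem : ∀ b ∈ t, b ∈ A := fun b hb => hmem b (Multiset.mem_cons_of_mem hb)
    have htc : Multiset.card t = k := Nat.succ_injective hc
    refine Set.mem_biUnion (show ((a, t.sum) : ℝ × ℝ) ∈ Set.antidiagonal A _ x from ?_) ?_
    · exact Set.mem_antidiagonal.2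
        ⟨hmem a (Multiset.mem_cons_self a t), ⟨t, htmem, htc, rfl⟩, hs⟩
    · exact ⟨t, ⟨htmem, htc, rfl⟩, rfl⟩

theorem increasing_real_positive_monoid_is_FF (f : ℕ → ℝ) (hf : Monotone f)
    (hnn : ∀ n, 0 ≤ f n) (P : AddSubmonoid ℝ)
    (hgen : AddSubmonoid.closure (Set.range f) = P) :
    IsFFMonoid P := by
  subst hgen
  set P := AddSubmonoid.closure (Set.range f) with hP
  by_cases hz : ∀ n, f n = 0
  · -- trivial case: everything is zero
    have hbot : ∀ x ∈ P, x = 0 := by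
      intro x hx
      have : P ≤ ⊥ := AddSubmonoid.closure_le.2 (by rintro y ⟨n, rfl⟩; simp [hz n])
      simpa using this hx
    constructor
    · intro x hx
      exact ⟨0, by simp, by simp [hbot x hx]⟩
    · intro x hx
      apply (Set.finite_singleton (0 : Multiset ℝ)).subset
      rintro s ⟨hatoms, -⟩
      simp only [Set.mem_singleton_iff]
      by_contra hne
      obtain ⟨a, ha⟩ := Multiset.exists_mem_of_ne_zero hne
      exact (hatoms a ha).2.1 (hbot a (hatoms a ha).1)
  · push_neg at hz
    set n0 := Nat.find hz with hn0
    set ε := f n0 with hε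
    have hεpos : 0 < ε := lt_of_le_of_ne (hnn n0) (Ne.symm (Nat.find_spec hz))
    have hgen_lb : ∀ n, f n = 0 ∨ ε ≤ f n := by
      intro n
      rcases lt_or_ge n n0 with h | h
      · left
        have := Nat.find_min hz h
        simpa using this
      · right; exact hf h
    -- lower bound for all nonzero elements of P
    have hlow : ∀ x ∈ P, 0 ≤ x ∧ (x = 0 ∨ ε ≤ x) := by
      have hle : P ≤
          { carrier := {x : ℝ | 0 ≤ x ∧ (x = 0 ∨ ε ≤ x)}
            zero_mem' := by simp
            add_mem' := by
              rintro a b ⟨ha0, ha⟩ ⟨hb0, hb⟩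
              refine ⟨add_nonneg ha0 hb0, ?_⟩
              rcases ha with rfl | ha
              · simpa using hb
              · right; linarith } := by
        apply AddSubmonoid.closure_le.2
        rintro y ⟨n, rfl⟩
        exact ⟨hnn n, hgen_lb n⟩
      intro x hx
      exact hle hx
    -- atomicity by induction on length bound
    have key : ∀ n : ℕ, ∀ x ∈ P, x ≤ n * ε →
        ∃ s : Multiset ℝ, (∀ a ∈ s, IsAtomOf P a) ∧ s.sum = x := by
      intro n
      induction n with
      | zero =>
        intro x hx hle
        have h0 : x = 0 := le_antisymm (by simpa using hle) (hlow x hx).1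
        exact ⟨0, by simp, by simp [h0]⟩
      | succ n ih =>
        intro x hx hle
        rcases eq_or_ne x 0 with rfl | hx0
        · exact ⟨0, by simp, by simp⟩
        by_cases hatom : IsAtomOf P x
        · exact ⟨{x}, by simpa using hatom, by simp⟩
        · have hdec : ∃ y ∈ P, ∃ z ∈ P, x = y + z ∧ y ≠ 0 ∧ z ≠ 0 := by
            unfold IsAtomOf at hatom
            push_neg at hatom
            obtain ⟨y, hy, z, hzP, hxyz, hy0, hz0⟩ := hatom hx hx0
            exact ⟨y, hy, z, hzP, hxyz, hy0, hz0⟩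
          obtain ⟨y, hyP, z, hzP, hxyz, hy0, hz0⟩ := hdec
          have hyε : ε ≤ y := (hlow y hyP).2.resolve_left hy0
          have hzε : ε ≤ z := (hlow z hzP).2.resolve_left hz0
          have hyle : y ≤ n * ε := by
            have : (n + 1 : ℕ) * ε = n * ε + ε := by push_cast; ring
            rw [this] at hle
            linarith [hxyz ▸ hle]
          have hzle : z ≤ n * ε := by
            have : (n + 1 : ℕ) * ε = n * ε + ε := by push_cast; ring
            rw [this] at hle
            linarith [hxyz ▸ hle]
          obtain ⟨sy, hsy, hsysum⟩ := ih y hyP hyle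
          obtain ⟨sz, hsz, hszsum⟩ := ih z hzP hzle
          refine ⟨sy + sz, ?_, by rw [Multiset.sum_add, hsysum, hszsum, hxyz]⟩
          intro a ha
          rcases Multiset.mem_add.1 ha with h | h
          · exact hsy a h
          · exact hsz a h
    have hatomic : IsAtomicMonoid P := by
      intro x hx
      refine key ⌈x / ε⌉₊ x hx ?_
      have h1 : x / ε ≤ (⌈x / ε⌉₊ : ℝ) := Nat.le_ceil _
      calc x = x / ε * ε := by field_simp
        _ ≤ (⌈x / ε⌉₊ : ℝ) * ε := by
            exact mul_le_mul_of_nonneg_right h1 hεpos.le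
    -- atoms are generators
    have hatom_gen : ∀ a : ℝ, IsAtomOf P a → a ∈ Set.range f := by
      rintro a ⟨haP, ha0, hmin⟩
      obtain ⟨l, hl, hlsum⟩ := AddSubmonoid.exists_list_of_mem_closure haP
      have hex : ∃ g ∈ l, g ≠ 0 := by
        by_contra h
        push_neg at h
        exact ha0 (hlsum ▸ List.sum_eq_zero h)
      obtain ⟨g, hgl, hg0⟩ := hex
      have hperm : l.Perm (g :: l.erase g) := List.perm_cons_erase hgl
      have hsum2 : a = g + (l.erase g).sum := by
        rw [← hlsum, hperm.sum_eq, List.sum_cons]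
      have hrest : (l.erase g).sum ∈ P :=
        AddSubmonoid.list_sum_mem _ fun y hy =>
          AddSubmonoid.subset_closure (hl y (List.mem_of_mem_erase hy))
      have hgP : g ∈ P := AddSubmonoid.subset_closure (hl g hgl)
      rcases hmin g hgP _ hrest hsum2 with h | h
      · exact absurd h hg0
      · have : a = g := by rw [hsum2, h, add_zero]
        exact this ▸ hl g hgl
    refine ⟨hatomic, ?_⟩
    intro x hx
    have hApwo : (Set.range f).IsPWO := by
      have huniv : (Set.univ : Set ℕ).IsPWO := (Set.isWF_univ_iff.2 inferInstance).isPWO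
      have := huniv.image_of_monotone hf
      simpa [Set.image_univ] using this
    apply Set.Finite.subset
      (Set.Finite.biUnion (Finset.range (⌈x / ε⌉₊ + 1) : Finset ℕ).finite_toSet
        (fun k _ => finite_multisets_of_isPWO (Set.range f) hApwo k x))
    rintro s ⟨hatoms, hsum⟩
    have hεmem : ∀ a ∈ s, ε ≤ a := by
      intro a ha
      exact (hlow a (hatoms a ha).1).2.resolve_left (hatoms a ha).2.1
    have hcard : (Multiset.card s : ℝ) * ε ≤ x := by
      have := Multiset.card_nsmul_le_sum hεmem
      rwa [nsmul_eq_mul, hsum] at this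
    have hcle : Multiset.card s ≤ ⌈x / ε⌉₊ := by
      have h1 : (Multiset.card s : ℝ) ≤ x / ε := (le_div_iff₀ hεpos).2 hcard
      have h2 : (Multiset.card s : ℝ) ≤ (⌈x / ε⌉₊ : ℝ) := h1.trans (Nat.le_ceil _)
      exact_mod_cast h2
    have h1 : Multiset.card s ∈ ((Finset.range (⌈x / ε⌉₊ + 1) : Finset ℕ) : Set ℕ) := by
      simpa [Finset.mem_range, Nat.lt_succ_iff] using hcle
    exact Set.mem_biUnion h1 ⟨fun a ha => hatom_gen a (hatoms a ha), rfl, hsum⟩
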